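/- Let ρ ∈ (0,1) and let S ∈ ℝ^{m×n} be any matrix such that ‖C_S − I_d‖₂ ≤ √ρ. Let C_S = Σ_{i=1}^d λ_i v_i v_iᵀ be an eigenvalue decomposition of C_S and, for x_0 ∈ ℝ^d, set ξ_i = ⟨v_i, H^{1/2}(x_0 − x*)⟩. Then for every t ≥ 0, (1/2) · min over real polynomials Q of degree at most t with Q(0)=1 of Σ_{i=1}^d Q(1/λ_i)² ξ_i² is at most 4 · ((1 − √(1−ρ))/(1 + √(1−ρ)))^t · δ_{x_0}. -/

import Mathlib

open Matrix MeasureTheory ProbabilityTheory Real Polynomial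
open scoped Classical

noncomputable section

/-- Spectral (operator) norm of a real matrix, via its action on Euclidean space. -/
def matSpectralNorm {k l : ℕ} (M : Matrix (Fin k) (Fin l) ℝ) : ℝ :=
  ‖LinearMap.toContinuousLinearMap (Matrix.toEuclideanLin M)‖

/-- Positive semidefinite square root of a matrix (junk value `0` if `M` is not
positive semidefinite). -/
def msqrt {d : ℕ} (M : Matrix (Fin d) (Fin d) ℝ) : Matrix (Fin d) (Fin d) ℝ :=
  if h : M.PosSemidef then
    (h.1.eigenvectorUnitary : Matrix (Fin d) (Fin d) ℝ) *
      diagonal (Real.sqrt ∘ h.1.eigenvalues) *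
      (star h.1.eigenvectorUnitary : Matrix (Fin d) (Fin d) ℝ)
  else 0

/-- The Hessian `H = Aᵀ A + ν² Λ`. -/
def Hmat {n d : ℕ} (A : Matrix (Fin n) (Fin d) ℝ) (ν : ℝ)
    (Λ : Matrix (Fin d) (Fin d) ℝ) : Matrix (Fin d) (Fin d) ℝ :=
  Aᵀ * A + ν ^ 2 • Λ

/-- The sketched Hessian `H_S = Aᵀ Sᵀ S A + ν² Λ`. -/
def HSmat {n d m : ℕ} (A : Matrix (Fin n) (Fin d) ℝ) (ν : ℝ)
    (Λ : Matrix (Fin d) (Fin d) ℝ) (S : Matrix (Fin m) (Fin n) ℝ) :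
    Matrix (Fin d) (Fin d) ℝ :=
  Aᵀ * Sᵀ * S * A + ν ^ 2 • Λ

/-- `C_S = H^{-1/2} H_S H^{-1/2}`. -/
def CSmat {n d m : ℕ} (A : Matrix (Fin n) (Fin d) ℝ) (ν : ℝ)
    (Λ : Matrix (Fin d) (Fin d) ℝ) (S : Matrix (Fin m) (Fin n) ℝ) :
    Matrix (Fin d) (Fin d) ℝ :=
  (msqrt (Hmat A ν Λ))⁻¹ * HSmat A ν Λ S * (msqrt (Hmat A ν Λ))⁻¹

/-- The minimizer `x* = H⁻¹ b`. -/
def xstar {n d : ℕ} (A : Matrix (Fin n) (Fin d) ℝ) (ν : ℝ)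
    (Λ : Matrix (Fin d) (Fin d) ℝ) (b : Fin d → ℝ) : Fin d → ℝ :=
  (Hmat A ν Λ)⁻¹.mulVec b

/-- The gradient `∇f(x) = H x - b`. -/
def gradf {n d : ℕ} (A : Matrix (Fin n) (Fin d) ℝ) (ν : ℝ)
    (Λ : Matrix (Fin d) (Fin d) ℝ) (b : Fin d → ℝ) (x : Fin d → ℝ) : Fin d → ℝ :=
  (Hmat A ν Λ).mulVec x - b

/-- The exact error `δ_x = (1/2)(x - x*)ᵀ H (x - x*)`. -/
def deltaEx {n d : ℕ} (A : Matrix (Fin n) (Fin d) ℝ) (ν : ℝ)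
    (Λ : Matrix (Fin d) (Fin d) ℝ) (b : Fin d → ℝ) (x : Fin d → ℝ) : ℝ :=
  (1 / 2) * ((x - xstar A ν Λ b) ⬝ᵥ (Hmat A ν Λ).mulVec (x - xstar A ν Λ b))

/-- The approximate Newton decrement `δ̃_x = (1/2) ∇f(x)ᵀ H_S⁻¹ ∇f(x)`. -/
def deltaApx {n d m : ℕ} (A : Matrix (Fin n) (Fin d) ℝ) (ν : ℝ)
    (Λ : Matrix (Fin d) (Fin d) ℝ) (b : Fin d → ℝ)
    (S : Matrix (Fin m) (Fin n) ℝ) (x : Fin d → ℝ) : ℝ :=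
  (1 / 2) * (gradf A ν Λ b x ⬝ᵥ (HSmat A ν Λ S)⁻¹.mulVec (gradf A ν Λ b x))


section Helpers

lemma msqrt_mul_self {d : ℕ} {M : Matrix (Fin d) (Fin d) ℝ} (h : M.PosSemidef) :
    msqrt M * msqrt M = M := by
  unfold msqrt
  rw [dif_pos h]
  set U : Matrix (Fin d) (Fin d) ℝ := (h.1.eigenvectorUnitary : Matrix (Fin d) (Fin d) ℝ) with hU
  have hUU : (star h.1.eigenvectorUnitary : Matrix (Fin d) (Fin d) ℝ) * U = 1 :=
    Unitary.coe_star_mul_self _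
  conv_rhs => rw [h.1.spectral_theorem, Unitary.conjStarAlgAut_apply]
  have hD : diagonal (Real.sqrt ∘ h.1.eigenvalues) * diagonal (Real.sqrt ∘ h.1.eigenvalues)
      = diagonal (RCLike.ofReal ∘ h.1.eigenvalues) := by
    rw [diagonal_mul_diagonal]
    congr 1
    funext i
    simp [Real.mul_self_sqrt (h.eigenvalues_nonneg i)]
  calc U * diagonal (Real.sqrt ∘ h.1.eigenvalues) *
        (star h.1.eigenvectorUnitary : Matrix (Fin d) (Fin d) ℝ) *
        (U * diagonal (Real.sqrt ∘ h.1.eigenvalues) *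
        (star h.1.eigenvectorUnitary : Matrix (Fin d) (Fin d) ℝ))
      = U * diagonal (Real.sqrt ∘ h.1.eigenvalues) *
        ((star h.1.eigenvectorUnitary : Matrix (Fin d) (Fin d) ℝ) * U) *
        diagonal (Real.sqrt ∘ h.1.eigenvalues) *
        (star h.1.eigenvectorUnitary : Matrix (Fin d) (Fin d) ℝ) := by
        simp only [Matrix.mul_assoc]
    _ = U * diagonal (RCLike.ofReal ∘ h.1.eigenvalues) *
        (star h.1.eigenvectorUnitary : Matrix (Fin d) (Fin d) ℝ) := by
        rw [hUU, Matrix.mul_one, ← hD]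
        simp only [Matrix.mul_assoc]

lemma msqrt_transpose {d : ℕ} {M : Matrix (Fin d) (Fin d) ℝ} (h : M.PosSemidef) :
    (msqrt M)ᵀ = msqrt M := by
  unfold msqrt
  rw [dif_pos h]
  simp [Matrix.transpose_mul, Matrix.star_eq_conjTranspose,
    Matrix.conjTranspose_eq_transpose_of_trivial, Matrix.mul_assoc]

lemma chebDeg : ∀ t : ℕ, (Polynomial.Chebyshev.T ℝ (t:ℤ)).natDegree ≤ t := by
  intro t
  induction t using Nat.strong_induction_on with
  | _ t ih =>
    match t with
    | 0 => simp [Polynomial.Chebyshev.T_zero]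
    | 1 => simp [Polynomial.Chebyshev.T_one]
    | (k+2) =>
      have h1 := ih (k+1) (by omega)
      have h0 := ih k (by omega)
      have hcast : ((k+2:ℕ):ℤ) = (k:ℤ) + 2 := by push_cast; ring
      rw [hcast, Polynomial.Chebyshev.T_add_two]
      have hcast1 : (k:ℤ) + 1 = ((k+1:ℕ):ℤ) := by push_cast; ring
      refine le_trans (natDegree_sub_le _ _) (max_le ?_ (h0.trans (by omega)))
      refine le_trans natDegree_mul_le ?_
      have h2 : (2 * X : Polynomial ℝ).natDegree ≤ 1 :=
        le_trans natDegree_mul_le (by simp)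
      rw [hcast1]
      omega

lemma chebCosh (t : ℕ) (u : ℝ) :
    (Polynomial.Chebyshev.T ℝ (t:ℤ)).eval (Real.cosh u) = Real.cosh (t*u) := by
  have h := Polynomial.Chebyshev.T_complex_cos ((u:ℂ) * Complex.I) (t:ℤ)
  rw [Complex.cos_mul_I] at h
  have h2 : ((t:ℤ):ℂ) * ((u:ℂ) * Complex.I) = ((t*u : ℝ):ℂ) * Complex.I := by
    push_cast; ring
  rw [h2, Complex.cos_mul_I] at h
  have h3 := Polynomial.Chebyshev.complex_ofReal_eval_T (Real.cosh u) (t:ℤ)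
  rw [Complex.ofReal_cosh] at h3
  have h4 : ((((Polynomial.Chebyshev.T ℝ (t:ℤ)).eval (Real.cosh u)) : ℝ) : ℂ)
      = ((Real.cosh (t*u) : ℝ) : ℂ) := by rw [h3, h, Complex.ofReal_cosh]
  exact_mod_cast h4

lemma chebBound (t : ℕ) (x : ℝ) (h1 : -1 ≤ x) (h2 : x ≤ 1) :
    |(Polynomial.Chebyshev.T ℝ (t:ℤ)).eval x| ≤ 1 := by
  have h := Polynomial.Chebyshev.T_real_cos (Real.arccos x) (t:ℤ)
  rw [Real.cos_arccos h1 h2] at h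
  rw [h]
  exact Real.abs_cos_le_one _

lemma chebLower (t : ℕ) (z : ℝ) (hz : 1 ≤ z) :
    (z + Real.sqrt (z^2-1))^t ≤ 2 * (Polynomial.Chebyshev.T ℝ (t:ℤ)).eval z := by
  set q := z + Real.sqrt (z^2-1) with hq
  have hsq : Real.sqrt (z^2-1)^2 = z^2 - 1 := Real.sq_sqrt (by nlinarith)
  have hq1 : 1 ≤ q := le_add_of_le_of_nonneg hz (Real.sqrt_nonneg _)
  have hq0 : 0 < q := by linarith
  have hmul : q * (z - Real.sqrt (z^2-1)) = 1 := by nlinarith [hsq]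
  have hqinv : z - Real.sqrt (z^2-1) = q⁻¹ := by
    field_simp
    linarith [hmul]
  set u := Real.log q with hu
  have heu : Real.exp u = q := Real.exp_log hq0
  have hcosh : Real.cosh u = z := by
    rw [Real.cosh_eq, Real.exp_neg, heu, ← hqinv, hq]; ring
  have hT := chebCosh t u
  rw [hcosh] at hT
  rw [hT, Real.cosh_eq]
  have hqt : q ^ t = Real.exp ((t:ℝ)*u) := by
    rw [Real.exp_nat_mul, heu]
  rw [hqt]
  have := Real.exp_pos (-((t:ℝ)*u))
  linarith

lemma eig_bound {d : ℕ} (M : Matrix (Fin d) (Fin d) ℝ) (v : Fin d → ℝ)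
    (hv : v ⬝ᵥ v = 1) (μ : ℝ) (hMv : M.mulVec v = μ • v) :
    |μ| ≤ ‖LinearMap.toContinuousLinearMap (Matrix.toEuclideanLin M)‖ := by
  set e : EuclideanSpace ℝ (Fin d) := (WithLp.equiv 2 (Fin d → ℝ)).symm v with he'
  have he : ‖e‖ = 1 := by
    rw [EuclideanSpace.norm_eq]
    have h1 : ∑ i, ‖v i‖^2 = 1 := by
      simpa [dotProduct, Real.norm_eq_abs, sq_abs, pow_two] using hv
    simp only [he']
    simp only [WithLp.equiv_symm_apply, PiLp.toLp_apply]
    rw [h1]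
    exact Real.sqrt_one
  have happ : (LinearMap.toContinuousLinearMap (Matrix.toEuclideanLin M)) e = μ • e := by
    simp only [LinearMap.coe_toContinuousLinearMap', he',
      WithLp.equiv_symm_apply, Matrix.toLpLin_toLp, Matrix.toLin'_apply, hMv]
    rfl
  have hle := (LinearMap.toContinuousLinearMap (Matrix.toEuclideanLin M)).le_opNorm e
  rw [happ, norm_smul, he, mul_one, Real.norm_eq_abs, mul_one] at hle
  exact hle

lemma parseval {d : ℕ} (v : Fin d → Fin d → ℝ)
    (hortho : ∀ i j, v i ⬝ᵥ v j = if i = j then (1 : ℝ) else 0) (u : Fin d → ℝ) :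
    ∑ i, (v i ⬝ᵥ u)^2 = u ⬝ᵥ u := by
  classical
  set V : Matrix (Fin d) (Fin d) ℝ := Matrix.of v with hV
  have hVVt : V * Vᵀ = 1 := by
    ext i j
    simpa [Matrix.mul_apply, dotProduct, Matrix.one_apply, hV, Matrix.of_apply] using hortho i j
  have hVtV : Vᵀ * V = 1 := mul_eq_one_comm.mp hVVt
  have h1 : u ⬝ᵥ u = u ⬝ᵥ ((Vᵀ * V).mulVec u) := by rw [hVtV]; simp
  rw [h1, ← Matrix.mulVec_mulVec, Matrix.dotProduct_mulVec, Matrix.vecMul_transpose]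
  simp [dotProduct, Matrix.mulVec, pow_two, mul_comm, hV, Matrix.of_apply]

lemma eigvec_eq {d : ℕ} (lam : Fin d → ℝ) (v : Fin d → Fin d → ℝ)
    (hortho : ∀ i j, v i ⬝ᵥ v j = if i = j then (1 : ℝ) else 0) (j : Fin d) :
    (∑ i, lam i • Matrix.vecMulVec (v i) (v i)).mulVec (v j) = lam j • v j := by
  classical
  ext k
  simp only [Matrix.mulVec, dotProduct, Matrix.sum_apply, Matrix.smul_apply,
    Matrix.vecMulVec_apply, smul_eq_mul, Pi.smul_apply, Finset.sum_mul]
  rw [Finset.sum_comm]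
  have hterm : ∀ i, ∑ l, lam i * (v i k * v i l) * v j l
      = lam i * v i k * (if i = j then (1:ℝ) else 0) := by
    intro i
    rw [← hortho i j]
    simp [dotProduct, Finset.mul_sum, mul_assoc]
  simp only [hterm]
  simp [Finset.sum_ite_eq]

end Helpers

set_option maxHeartbeats 2000000 in
/-- If `‖C_S - I‖₂ ≤ √ρ` with `ρ ∈ (0,1)`, then
`(1/2)·min_{Q, deg Q ≤ t, Q(0)=1} Σ_i Q(1/λ_i)² ξ_i²
  ≤ 4·((1-√(1-ρ))/(1+√(1-ρ)))^t · δ_{x_0}`. -/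

theorem stmt7 {n d m : ℕ} (hd : 1 ≤ d) (hdn : d ≤ n)
    (A : Matrix (Fin n) (Fin d) ℝ) (b : Fin d → ℝ)
    (Λ : Matrix (Fin d) (Fin d) ℝ) (hΛdiag : Λ.IsDiag)
    (hΛ : (Λ - 1).PosSemidef) (ν : ℝ) (hν : 0 < ν)
    (ρ : ℝ) (hρ : ρ ∈ Set.Ioo (0 : ℝ) 1)
    (S : Matrix (Fin m) (Fin n) ℝ)
    (hS : matSpectralNorm (CSmat A ν Λ S - 1) ≤ Real.sqrt ρ)
    -- eigenvalue decomposition `C_S = Σ_i λ_i v_i v_iᵀ`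
    (lam : Fin d → ℝ) (v : Fin d → Fin d → ℝ)
    (hortho : ∀ i j, v i ⬝ᵥ v j = if i = j then (1 : ℝ) else 0)
    (hpos : ∀ i, 0 < lam i)
    (hdecomp : CSmat A ν Λ S = ∑ i, lam i • Matrix.vecMulVec (v i) (v i))
    (x₀ : Fin d → ℝ) :
    ∀ t : ℕ,
      sInf {y : ℝ | ∃ Q : Polynomial ℝ, Q.natDegree ≤ t ∧ Q.eval 0 = 1 ∧
          y = (1 / 2) * ∑ i, (Q.eval (lam i)⁻¹) ^ 2 *
            (v i ⬝ᵥ (msqrt (Hmat A ν Λ)).mulVec (x₀ - xstar A ν Λ b)) ^ 2}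
        ≤ 4 * ((1 - Real.sqrt (1 - ρ)) / (1 + Real.sqrt (1 - ρ))) ^ t *
            deltaEx A ν Λ b x₀ := by
    intro t
    obtain ⟨hρ0, hρ1⟩ := hρ
    have hs0 : 0 < Real.sqrt ρ := Real.sqrt_pos.2 hρ0
    have hs1 : Real.sqrt ρ < 1 := by
      rw [show (1:ℝ) = Real.sqrt 1 by simp]
      exact Real.sqrt_lt_sqrt hρ0.le hρ1
    have hssq : Real.sqrt ρ ^ 2 = ρ := Real.sq_sqrt hρ0.le
    have hw0 : 0 < Real.sqrt (1-ρ) := Real.sqrt_pos.2 (by linarith)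
    have hwsq : Real.sqrt (1-ρ) ^ 2 = 1 - ρ := Real.sq_sqrt (by linarith)
    set s := Real.sqrt ρ with hsdef
    set w := Real.sqrt (1-ρ) with hwdef
    have hw1 : w < 1 := by nlinarith [hwsq]
    -- positive semidefiniteness of H
    have hΛps : Λ.PosSemidef := by
      have h := hΛ.add (Matrix.PosSemidef.one (n := Fin d) (R := ℝ))
      simpa using h
    have hAps : (Aᵀ * A).PosSemidef := by
      have h := Matrix.posSemidef_conjTranspose_mul_self A
      rwa [A.conjTranspose_eq_transpose_of_trivial] at h
    have hsmul : ((ν^2 : ℝ) • Λ).PosSemidef := by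
      refine ⟨?_, fun x => ?_⟩
      · have hΛT : Λᵀ = Λ := by
          rw [← Λ.conjTranspose_eq_transpose_of_trivial]; exact hΛps.1
        simp [Matrix.IsHermitian, Matrix.conjTranspose_smul, hΛT]
      · exact (hΛps.smul (sq_nonneg ν)).2 x
    have hH : (Hmat A ν Λ).PosSemidef := hAps.add hsmul
    have hmsqrt : msqrt (Hmat A ν Λ) = msqrt (Hmat A ν Λ) := rfl
    have hSqT : (msqrt (Hmat A ν Λ))ᵀ = msqrt (Hmat A ν Λ) := msqrt_transpose hH
    set z := x₀ - xstar A ν Λ b with hz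
    set u := (msqrt (Hmat A ν Λ)).mulVec z with hu
    have huu : u ⬝ᵥ u = 2 * deltaEx A ν Λ b x₀ := by
      have step : u ⬝ᵥ u = z ⬝ᵥ (Hmat A ν Λ).mulVec z := by
        rw [hu, hmsqrt, Matrix.dotProduct_mulVec, Matrix.vecMul_mulVec, hSqT,
          msqrt_mul_self hH, ← Matrix.dotProduct_mulVec]
      have hde : deltaEx A ν Λ b x₀ = (1/2) * (z ⬝ᵥ (Hmat A ν Λ).mulVec z) := by
        rw [hz]; rfl
      rw [step, hde]; ring
    have hxi : ∑ i, (v i ⬝ᵥ u)^2 = 2 * deltaEx A ν Λ b x₀ :=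
      (parseval v hortho u).trans huu
    -- eigenvalue bounds
    have hM : ∀ j, (CSmat A ν Λ S - 1).mulVec (v j) = (lam j - 1) • v j := by
      intro j
      rw [Matrix.sub_mulVec, hdecomp, eigvec_eq lam v hortho j]
      simp [Matrix.one_mulVec, sub_smul]
    have hlam : ∀ j, |lam j - 1| ≤ s := by
      intro j
      have h1 : v j ⬝ᵥ v j = 1 := by simpa using hortho j j
      exact (eig_bound _ (v j) h1 _ (hM j)).trans hS
    have hlo : ∀ j, 1 - s ≤ lam j := fun j => by
      have := (abs_le.1 (hlam j)).1; linarith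
    have hhi : ∀ j, lam j ≤ 1 + s := fun j => by
      have := (abs_le.1 (hlam j)).2; linarith
    -- Chebyshev polynomial construction
    have hz1 : 1 ≤ 1/s := by rw [le_div_iff₀ hs0]; linarith
    have hsqr : Real.sqrt ((1/s)^2 - 1) = w / s := by
      rw [show (1/s)^2 - 1 = (w/s)^2 by field_simp; nlinarith [hssq, hwsq]]
      exact Real.sqrt_sq (by positivity)
    set c := (Polynomial.Chebyshev.T ℝ (t:ℤ)).eval (1/s) with hc
    have hcl : ((1+w)/s)^t ≤ 2*c := by
      have h := chebLower t (1/s) hz1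
      rwa [hsqr, show 1/s + w/s = (1+w)/s by ring] at h
    have hqpos : (0:ℝ) < ((1+w)/s)^t := pow_pos (div_pos (by linarith) hs0) t
    have hcpos : 0 < c := by linarith
    set L : Polynomial ℝ := Polynomial.C (1/s) - Polynomial.C (w^2/s) * Polynomial.X with hL
    set Q : Polynomial ℝ := Polynomial.C c⁻¹ * ((Polynomial.Chebyshev.T ℝ (t:ℤ)).comp L) with hQdef
    have hLdeg : L.natDegree ≤ 1 := by
      rw [hL]
      refine le_trans (Polynomial.natDegree_sub_le _ _) (max_le (by simp) ?_)
      exact le_trans Polynomial.natDegree_mul_le (by simp)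
    have hdeg : Q.natDegree ≤ t := by
      rw [hQdef]
      refine le_trans Polynomial.natDegree_mul_le ?_
      rw [Polynomial.natDegree_C, zero_add]
      refine le_trans Polynomial.natDegree_comp_le ?_
      calc (Polynomial.Chebyshev.T ℝ (t:ℤ)).natDegree * L.natDegree
          ≤ t * 1 := Nat.mul_le_mul (chebDeg t) hLdeg
        _ = t := mul_one t
    have hL0 : L.eval 0 = 1/s := by simp [hL]
    have hQ0 : Q.eval 0 = 1 := by
      rw [hQdef]
      simp only [Polynomial.eval_mul, Polynomial.eval_C, Polynomial.eval_comp, hL0, ← hc]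
      exact inv_mul_cancel₀ hcpos.ne'
    have hcinv : c⁻¹ ≤ 2 * (s/(1+w))^t := by
      have h1 : c⁻¹ ≤ (((1+w)/s)^t/2)⁻¹ :=
        by
        apply inv_anti₀ (by positivity) (by linarith)
      have h2 : (((1+w)/s)^t/2)⁻¹ = 2 * (s/(1+w))^t := by
        rw [inv_div, div_eq_mul_inv, ← inv_pow, inv_div]
      rw [h2] at h1
      exact h1
    have hr : (s/(1+w))^2 = (1-w)/(1+w) := by
      rw [div_pow]
      rw [div_eq_div_iff (by positivity) (by linarith)]
      linear_combination (1+w)*hssq + (1+w)*hwsq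
    have hQb : ∀ j, (Q.eval (lam j)⁻¹)^2 ≤ 4 * ((1-w)/(1+w))^t := by
      intro j
      have hlam0 := hpos j
      have hsl : 0 < s * lam j := mul_pos hs0 hlam0
      have hLe : L.eval (lam j)⁻¹ = (lam j - w^2)/(s * lam j) := by
        rw [hL]
        simp only [Polynomial.eval_sub, Polynomial.eval_mul, Polynomial.eval_C,
          Polynomial.eval_X]
        field_simp
      have hub : L.eval (lam j)⁻¹ ≤ 1 := by
        rw [hLe, div_le_one hsl]
        have hx := mul_le_mul_of_nonneg_right (hhi j) (by linarith : (0:ℝ) ≤ 1 - s)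
        nlinarith [hx, hssq, hwsq]
      have hlb : -1 ≤ L.eval (lam j)⁻¹ := by
        rw [hLe, le_div_iff₀ hsl]
        have hx := mul_le_mul_of_nonneg_right (hlo j) (by linarith : (0:ℝ) ≤ 1 + s)
        nlinarith [hx, hssq, hwsq]
      have hTb := chebBound t _ hlb hub
      have hQe : Q.eval (lam j)⁻¹
          = c⁻¹ * (Polynomial.Chebyshev.T ℝ (t:ℤ)).eval (L.eval (lam j)⁻¹) := by
        rw [hQdef]; simp [Polynomial.eval_comp]
      have habs : |Q.eval (lam j)⁻¹| ≤ 2*(s/(1+w))^t := by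
        rw [hQe, abs_mul, abs_of_nonneg (inv_nonneg.2 hcpos.le)]
        calc c⁻¹ * |(Polynomial.Chebyshev.T ℝ (t:ℤ)).eval (L.eval (lam j)⁻¹)|
            ≤ c⁻¹ * 1 := mul_le_mul_of_nonneg_left hTb (inv_nonneg.2 hcpos.le)
          _ = c⁻¹ := mul_one _
          _ ≤ 2*(s/(1+w))^t := hcinv
      calc (Q.eval (lam j)⁻¹)^2 = |Q.eval (lam j)⁻¹|^2 := (sq_abs _).symm
        _ ≤ (2*(s/(1+w))^t)^2 := pow_le_pow_left₀ (abs_nonneg _) habs 2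
        _ = 4 * ((s/(1+w))^2)^t := by ring
        _ = 4 * ((1-w)/(1+w))^t := by rw [hr]
    -- conclude
    have hmem : (1/2 : ℝ) * ∑ i, (Q.eval (lam i)⁻¹)^2 * (v i ⬝ᵥ u)^2 ∈
        {y : ℝ | ∃ P : Polynomial ℝ, P.natDegree ≤ t ∧ P.eval 0 = 1 ∧
          y = (1/2) * ∑ i, (P.eval (lam i)⁻¹)^2 * (v i ⬝ᵥ u)^2} := ⟨Q, hdeg, hQ0, rfl⟩
    have hbdd : BddBelow {y : ℝ | ∃ P : Polynomial ℝ, P.natDegree ≤ t ∧ P.eval 0 = 1 ∧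
          y = (1/2) * ∑ i, (P.eval (lam i)⁻¹)^2 * (v i ⬝ᵥ u)^2} := by
      refine ⟨0, fun y hy => ?_⟩
      obtain ⟨P, _, _, rfl⟩ := hy
      positivity
    refine le_trans (csInf_le hbdd hmem) ?_
    calc (1/2 : ℝ) * ∑ i, (Q.eval (lam i)⁻¹)^2 * (v i ⬝ᵥ u)^2
        ≤ (1/2) * ∑ i, (4 * ((1-w)/(1+w))^t) * (v i ⬝ᵥ u)^2 := by
          refine mul_le_mul_of_nonneg_left ?_ (by norm_num)
          exact Finset.sum_le_sum fun i _ =>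
            mul_le_mul_of_nonneg_right (hQb i) (sq_nonneg _)
      _ = 4 * ((1-w)/(1+w))^t * deltaEx A ν Λ b x₀ := by
          rw [← Finset.mul_sum, hxi]; ring
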